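/- Let b : V → ℝ be positive with ∑_{i∈V} b_i = N, on a graph G = (V,E) with |V| = N and |E| = L, where b_i ≥ (1/2)(1 + 1/(N−1)) for each i. Then β := ∑_{i∈V} ∑_{j∈N_i∪{i}} b_i b_j satisfies N + (L/2)(1 + 1/(N−1))² ≤ β ≤ N². -/
import Mathlib


theorem stmt13 {V : Type*} [Fintype V] [DecidableEq V] (G : SimpleGraph V)
    [DecidableRel G.Adj] (hN : 2 ≤ Fintype.card V)
    (b : V → ℝ) (hb : ∀ i, 0 < b i) (hsum : ∑ i, b i = (Fintype.card V : ℝ))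
    (hlb : ∀ i, (1 / 2) * (1 + 1 / ((Fintype.card V : ℝ) - 1)) ≤ b i) :
    (Fintype.card V : ℝ)
        + ((G.edgeFinset.card : ℝ) / 2) * (1 + 1 / ((Fintype.card V : ℝ) - 1)) ^ 2
      ≤ ∑ i, ∑ j ∈ insert i (G.neighborFinset i), b i * b j ∧
    ∑ i, ∑ j ∈ insert i (G.neighborFinset i), b i * b j ≤ (Fintype.card V : ℝ) ^ 2 := by
  have hN2 : (2:ℝ) ≤ (Fintype.card V : ℝ) := by exact_mod_cast hN
  set N : ℝ := (Fintype.card V : ℝ) with hNdef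
  have hN1 : (0:ℝ) < N - 1 := by linarith
  set c : ℝ := (1/2) * (1 + 1/(N-1)) with hc
  have hc0 : 0 < c := by
    have h1 : 0 < 1/(N-1) := div_pos one_pos hN1
    rw [hc]; nlinarith
  -- split the inner sums
  have hsplit : ∀ i, ∑ j ∈ insert i (G.neighborFinset i), b i * b j
      = b i * b i + ∑ j ∈ G.neighborFinset i, b i * b j := fun i =>
    Finset.sum_insert (G.notMem_neighborFinset_self i)
  have hβ : ∑ i, ∑ j ∈ insert i (G.neighborFinset i), b i * b j
      = (∑ i, b i * b i) + ∑ i, ∑ j ∈ G.neighborFinset i, b i * b j := by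
    rw [← Finset.sum_add_distrib]
    exact Finset.sum_congr rfl fun i _ => hsplit i
  constructor
  · -- lower bound
    have hA : N ≤ ∑ i, b i * b i := by
      have h := sq_sum_le_card_mul_sum_sq (s := Finset.univ) (f := b)
      simp only [Finset.card_univ] at h
      rw [hsum] at h
      have h' : N ^ 2 ≤ N * ∑ i, b i ^ 2 := by exact_mod_cast h
      have : N ≤ ∑ i, b i ^ 2 := by nlinarith
      simpa [sq] using this
    have hB : 2 * (G.edgeFinset.card : ℝ) * c ^ 2
        ≤ ∑ i, ∑ j ∈ G.neighborFinset i, b i * b j := by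
      have step : ∀ i, (G.degree i : ℝ) * c ^ 2
          ≤ ∑ j ∈ G.neighborFinset i, b i * b j := by
        intro i
        have : ∑ j ∈ G.neighborFinset i, c * c ≤ ∑ j ∈ G.neighborFinset i, b i * b j := by
          refine Finset.sum_le_sum fun j _ => ?_
          exact mul_le_mul (hlb i) (hlb j) hc0.le (hb i).le
        simpa [Finset.sum_const, SimpleGraph.card_neighborFinset_eq_degree, sq,
          mul_comm, mul_assoc] using this
      calc 2 * (G.edgeFinset.card : ℝ) * c ^ 2
          = ((∑ i, G.degree i : ℕ) : ℝ) * c ^ 2 := by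
            rw [SimpleGraph.sum_degrees_eq_twice_card_edges]
            push_cast; ring
        _ = ∑ i, (G.degree i : ℝ) * c ^ 2 := by
            push_cast; rw [Finset.sum_mul]
        _ ≤ _ := Finset.sum_le_sum fun i _ => step i
    have hEq : ((G.edgeFinset.card : ℝ) / 2) * (1 + 1/(N-1)) ^ 2
        = 2 * (G.edgeFinset.card : ℝ) * c ^ 2 := by rw [hc]; ring
    rw [hβ, hEq]; linarith
  · -- upper bound
    have h1 : ∑ i, ∑ j ∈ insert i (G.neighborFinset i), b i * b j
        ≤ ∑ i, ∑ j, b i * b j := by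
      refine Finset.sum_le_sum fun i _ => ?_
      refine Finset.sum_le_sum_of_subset_of_nonneg (Finset.subset_univ _) ?_
      intro j _ _
      exact mul_nonneg (hb i).le (hb j).le
    have h2 : ∑ i, ∑ j, b i * b j = N ^ 2 := by
      simp only [← Finset.mul_sum, ← Finset.sum_mul, hsum]; ring
    linarith
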